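/- Let m ≥ 2, α a primitive element of F_{2^{2m}}, f a d-form function from F_{2^{2m}} to F_{2^m} with difference-balanced property (gcd(d, 2^{2m}-1)=1), C_1' a (2^m - 1, 2^{m-1} - 1, 2^{m-2} - 1) difference set in Z_{2^m - 1}, C_1 = {(2^m + 1)i : i ∈ C_1'}, C_2 = {i ∈ Z_{2^{2m}-1} : f(α^i) = 1}, and C = C_1 + C_2 (sumset mod 2^{2m} - 1). Then for every τ = (2^m + 1)τ_1 with τ_1 ∈ {1, ..., 2^m - 2}, the difference function satisfies d_C(τ) = |C ∩ (C + τ)| = 2^{2m-2} - 2^m. -/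
import Mathlib


open Finset Pointwise

/-- Difference function of the Sun et al. construction at shifts (2^m+1)τ₁. -/
theorem sun_construction_difference_function
    {F E : Type*} [Field F] [Field E] [Fintype F] [Fintype E]
    [DecidableEq F] [DecidableEq E] [Algebra F E]
    (m d : ℕ) (hm : 2 ≤ m)
    (hcardF : Fintype.card F = 2 ^ m) (hcardE : Fintype.card E = 2 ^ (2 * m))
    (hd : 0 < d) (hgcd : Nat.gcd d (2 ^ (2 * m) - 1) = 1)
    (f : E → F) (hf : ∀ (x : E) (y : F), f (algebraMap F E y * x) = y ^ d * f x)
    (hdb : ∀ z : E, z ≠ 0 → z ≠ 1 → ∀ b : F,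
      (Finset.univ.filter (fun x : E => x ≠ 0 ∧ f (x * z) - f x = b)).card =
        if b = 0 then 2 ^ m - 1 else 2 ^ m)
    (α : E) (hα : orderOf α = 2 ^ (2 * m) - 1)
    (C₁' : Finset (ZMod (2 ^ m - 1)))
    (hC₁'card : C₁'.card = 2 ^ (m - 1) - 1)
    (hC₁'ds : ∀ τ₁ : ZMod (2 ^ m - 1), τ₁ ≠ 0 →
      (C₁' ∩ C₁'.image (fun c => τ₁ + c)).card = 2 ^ (m - 2) - 1)
    (C₁ C₂ C : Finset (ZMod (2 ^ (2 * m) - 1)))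
    (hC₁ : C₁ = C₁'.image (fun i => ((2 ^ m + 1) * i.val : ZMod (2 ^ (2 * m) - 1))))
    (hC₂ : C₂ = ((Finset.range (2 ^ (2 * m) - 1)).filter
      (fun i => f (α ^ i) = 1)).image (Nat.cast : ℕ → ZMod (2 ^ (2 * m) - 1)))
    (hC : C = C₁ + C₂)
    (τ₁ : ℕ) (hτ₁ : 1 ≤ τ₁) (hτ₁' : τ₁ ≤ 2 ^ m - 2) :
    (C ∩ C.image (fun c => c + ((2 ^ m + 1) * τ₁ : ZMod (2 ^ (2 * m) - 1)))).card
      = 2 ^ (2 * m - 2) - 2 ^ m := by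
  classical
  -- Basic arithmetic facts
  have hq4 : 4 ≤ 2 ^ m := by
    calc (4:ℕ) = 2 ^ 2 := rfl
    _ ≤ 2 ^ m := Nat.pow_le_pow_right (by norm_num) hm
  have hvq : (2 ^ m + 1) * (2 ^ m - 1) = 2 ^ (2 * m) - 1 := by
    have h2 : 2 ^ (2 * m) = 2 ^ m * 2 ^ m := by rw [← pow_add]; congr 1; omega
    have h1 : 1 ≤ 2 ^ m := by omega
    have h3 : 1 ≤ 2 ^ m * 2 ^ m := Nat.one_le_iff_ne_zero.mpr (by positivity)
    rw [h2]; zify [h1, h3]; ring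
  have hvq' : (2 ^ m - 1) * (2 ^ m + 1) = 2 ^ (2 * m) - 1 := by
    rw [mul_comm (2 ^ m - 1)]; exact hvq
  have hV16 : 16 ≤ 2 ^ (2 * m) := by
    calc (16:ℕ) = 2 ^ 4 := rfl
    _ ≤ 2 ^ (2 * m) := Nat.pow_le_pow_right (by norm_num) (by omega)
  haveI : NeZero (2 ^ (2 * m) - 1) := ⟨by omega⟩
  haveI : NeZero (2 ^ m - 1) := ⟨by omega⟩
  -- α facts
  have hα0 : α ≠ 0 := by
    intro h
    have h1 := pow_orderOf_eq_one α
    rw [hα, h, zero_pow (by omega : 2 ^ (2*m) - 1 ≠ 0)] at h1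
    exact zero_ne_one h1
  have hαinj : Set.InjOn (α ^ ·) (Set.Iio (2 ^ (2 * m) - 1)) := hα ▸ pow_injOn_Iio_orderOf
  have hunits : (Finset.range (2 ^ (2 * m) - 1)).image (α ^ ·) = univ.filter (· ≠ (0:E)) := by
    apply Finset.eq_of_subset_of_card_le
    · intro x hx
      simp only [mem_image, mem_range] at hx
      obtain ⟨i, _, rfl⟩ := hx
      simp [pow_ne_zero _ hα0]
    · rw [Finset.card_image_of_injOn (fun i hi j hj hij =>
        hαinj (by simpa using hi) (by simpa using hj) hij), card_range,
        Finset.filter_ne', card_erase_of_mem (mem_univ _), card_univ, hcardE]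
  have hsurj : ∀ x : E, x ≠ 0 → ∃ i, i < 2 ^ (2 * m) - 1 ∧ α ^ i = x := by
    intro x hx
    have hx2 : x ∈ (Finset.range (2 ^ (2 * m) - 1)).image (α ^ ·) := by
      rw [hunits]; simp [hx]
    simpa only [mem_image, mem_range, exists_prop] using hx2
  -- β = α^(2^m+1) has order 2^m-1
  have hβord : orderOf (α ^ (2 ^ m + 1)) = 2 ^ m - 1 := by
    have h1 : (α ^ (2 ^ m + 1)) ^ (2 ^ m - 1) = 1 := by
      rw [← pow_mul, hvq, ← hα, pow_orderOf_eq_one]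
    have h2 := orderOf_dvd_of_pow_eq_one h1
    have h3 : (α ^ (2 ^ m + 1)) ^ (orderOf (α ^ (2 ^ m + 1))) = 1 := pow_orderOf_eq_one _
    rw [← pow_mul] at h3
    have h4 := orderOf_dvd_of_pow_eq_one h3
    rw [hα, ← hvq] at h4
    have h5 : (2 ^ m - 1) ∣ orderOf (α ^ (2 ^ m + 1)) :=
      (Nat.mul_dvd_mul_iff_left (show 0 < 2 ^ m + 1 by omega)).mp h4
    exact Nat.dvd_antisymm h2 h5
  -- β is in the image of F
  have hy₀ex : ∃ y₀ : F, y₀ ≠ 0 ∧ algebraMap F E y₀ = α ^ (2 ^ m + 1) := by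
    set S := (univ.filter (· ≠ (0:F))).image (algebraMap F E) with hS
    set T := (Finset.range (2 ^ m - 1)).image (fun k => (α ^ (2 ^ m + 1)) ^ k) with hT
    have hST : S ⊆ T := by
      intro x hx
      simp only [hS, mem_image, mem_filter, mem_univ, true_and] at hx
      obtain ⟨y, hy, rfl⟩ := hx
      have h1 : (algebraMap F E y) ^ (2 ^ m - 1) = 1 := by
        rw [← map_pow, ← hcardF, FiniteField.pow_card_sub_one_eq_one y hy, map_one]
      obtain ⟨i, hi, hix⟩ := hsurj (algebraMap F E y)
        ((map_ne_zero_iff _ (algebraMap F E).injective).mpr hy)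
      have h2 : orderOf α ∣ i * (2 ^ m - 1) :=
        orderOf_dvd_of_pow_eq_one (by rw [pow_mul, hix, h1])
      rw [hα, ← hvq] at h2
      have h3 : (2 ^ m + 1) ∣ i := by
        have h4 : (2 ^ m + 1) * (2 ^ m - 1) ∣ i * (2 ^ m - 1) := h2
        exact (Nat.mul_dvd_mul_iff_right (show 0 < 2 ^ m - 1 by omega)).mp h4
      obtain ⟨k, rfl⟩ := h3
      simp only [hT, mem_image, mem_range]
      refine ⟨k % (2 ^ m - 1), Nat.mod_lt _ (by omega), ?_⟩
      rw [← hβord, pow_mod_orderOf, ← pow_mul, ← hix]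
    have hScard : S.card = 2 ^ m - 1 := by
      rw [hS, card_image_of_injective _ (algebraMap F E).injective,
        Finset.filter_ne', card_erase_of_mem (mem_univ _), card_univ, hcardF]
    have hTcard : T.card ≤ 2 ^ m - 1 := (Finset.card_image_le).trans (by simp)
    have hSeqT : S = T := Finset.eq_of_subset_of_card_le hST (by omega)
    have hβT : α ^ (2 ^ m + 1) ∈ T := by
      simp only [hT, mem_image, mem_range]
      exact ⟨1, by omega, pow_one _⟩
    rw [← hSeqT] at hβT
    simp only [hS, mem_image, mem_filter, mem_univ, true_and] at hβT
    obtain ⟨y, hy, hyβ⟩ := hβT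
    exact ⟨y, hy, hyβ⟩
  obtain ⟨y₀, hy₀0, hy₀β⟩ := hy₀ex
  have hy₀ord : orderOf y₀ = 2 ^ m - 1 := by
    have h := orderOf_injective (algebraMap F E).toMonoidHom (algebraMap F E).injective y₀
    have h2 : ((algebraMap F E).toMonoidHom) y₀ = α ^ (2 ^ m + 1) := hy₀β
    rw [h2, hβord] at h
    exact h.symm
  have hgcdn : Nat.Coprime d (2 ^ m - 1) :=
    Nat.Coprime.coprime_dvd_right ⟨2 ^ m + 1, hvq'.symm⟩ hgcd
  -- g = y₀^d has order 2^m - 1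
  have hgord : orderOf (y₀ ^ d) = 2 ^ m - 1 := by
    have h1 : (y₀ ^ d) ^ (2 ^ m - 1) = 1 := by
      rw [← pow_mul, mul_comm, pow_mul, ← hy₀ord, pow_orderOf_eq_one, one_pow]
    have h2 := orderOf_dvd_of_pow_eq_one h1
    have h3 : (y₀ ^ d) ^ orderOf (y₀ ^ d) = 1 := pow_orderOf_eq_one _
    rw [← pow_mul] at h3
    have h4 := orderOf_dvd_of_pow_eq_one h3
    rw [hy₀ord] at h4
    have h5 : (2 ^ m - 1) ∣ orderOf (y₀ ^ d) := (hgcdn.symm).dvd_of_dvd_mul_left h4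
    exact Nat.dvd_antisymm h2 h5
  have hg1 : y₀ ^ d ≠ 1 := by
    intro h; rw [h, orderOf_one] at hgord; omega
  -- key scaling identity
  have hkey : ∀ i k : ℕ, f (α ^ (i + (2 ^ m + 1) * k)) = (y₀ ^ d) ^ k * f (α ^ i) := by
    intro i k
    have h1 : α ^ (i + (2 ^ m + 1) * k) = algebraMap F E (y₀ ^ k) * α ^ i := by
      rw [map_pow, hy₀β, pow_add, ← pow_mul, mul_comm (2 ^ m + 1) k, pow_mul, mul_comm]
    rw [h1, hf, ← pow_mul, mul_comm k d, pow_mul]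
  -- Lemma A : elements of C₂ determined by residue mod 2^m+1
  have hA : ∀ i j : ℕ, i < 2 ^ (2 * m) - 1 → j < 2 ^ (2 * m) - 1 →
      f (α ^ i) = 1 → f (α ^ j) = 1 → i % (2 ^ m + 1) = j % (2 ^ m + 1) → i = j := by
    have main : ∀ i j : ℕ, j ≤ i → i < 2 ^ (2 * m) - 1 → f (α ^ i) = 1 → f (α ^ j) = 1 →
        i % (2 ^ m + 1) = j % (2 ^ m + 1) → i = j := by
      intro i j hji hi hfi hfj hmod
      have hdvd : (2 ^ m + 1) ∣ i - j := (Nat.modEq_iff_dvd' hji).mp hmod.symm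
      obtain ⟨k, hk⟩ := hdvd
      have hieq : i = j + (2 ^ m + 1) * k := by rw [← hk]; omega
      rw [hieq, hkey, hfj, mul_one] at hfi
      have hnk : (2 ^ m - 1) ∣ k := hgord ▸ orderOf_dvd_of_pow_eq_one hfi
      have hklt : k < 2 ^ m - 1 := by
        have h1 : (2 ^ m + 1) * k < (2 ^ m + 1) * (2 ^ m - 1) := by rw [hvq]; omega
        exact Nat.lt_of_mul_lt_mul_left h1
      have hk0 : k = 0 := Nat.eq_zero_of_dvd_of_lt hnk hklt
      rw [hk0, mul_zero, add_zero] at hieq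
      exact hieq
    intro i j hi hj hfi hfj hmod
    rcases le_total j i with h | h
    · exact main i j h hi hfi hfj hmod
    · exact (main j i h hj hfj hfi hmod.symm).symm
  -- N₀ = 2^m - 1
  have hβ0 : α ^ (2 ^ m + 1) ≠ 0 := pow_ne_zero _ hα0
  have hβ1 : α ^ (2 ^ m + 1) ≠ (1:E) := by
    intro h; rw [h, orderOf_one] at hβord; omega
  have hN0 : (univ.filter (fun x : E => x ≠ 0 ∧ f x = 0)).card = 2 ^ m - 1 := by
    have h := hdb (α ^ (2 ^ m + 1)) hβ0 hβ1 0
    rw [if_pos rfl] at h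
    rw [← h]
    apply congrArg
    apply Finset.filter_congr
    intro x _
    have h1 : f (x * α ^ (2 ^ m + 1)) = (y₀ ^ d) * f x := by
      rw [mul_comm, ← hy₀β, hf]
    constructor
    · rintro ⟨hx0, hx⟩
      exact ⟨hx0, by rw [h1, hx, mul_zero, sub_zero]⟩
    · rintro ⟨hx0, hx⟩
      refine ⟨hx0, ?_⟩
      have h2 : (y₀ ^ d - 1) * f x = 0 := by rw [sub_mul, one_mul, ← h1]; exact hx
      rcases mul_eq_zero.mp h2 with h3 | h3
      · exact absurd (by rwa [sub_eq_zero] at h3) hg1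
      · exact h3
  -- fibers over nonzero values all have the same size
  have hdsurj : ∀ b : F, b ≠ 0 → ∃ y : F, y ≠ 0 ∧ y ^ d = b := by
    intro b hb
    have hinj : Function.Injective (fun u : Fˣ => u ^ d) := by
      intro u w h
      simp only at h
      have h1 : (u * w⁻¹) ^ d = 1 := by
        rw [mul_pow, h, inv_pow, mul_inv_cancel]
      have h2 : orderOf (u * w⁻¹) ∣ d := orderOf_dvd_of_pow_eq_one h1
      have h3 : orderOf (u * w⁻¹) ∣ 2 ^ m - 1 := by
        have := orderOf_dvd_card (x := u * w⁻¹)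
        rwa [Fintype.card_units, hcardF] at this
      have h4 : orderOf (u * w⁻¹) = 1 := Nat.dvd_one.mp (hgcd ▸ (Nat.dvd_gcd h2 (by
        refine h3.trans ⟨2 ^ m + 1, hvq'.symm⟩)))
      have h5 : u * w⁻¹ = 1 := orderOf_eq_one_iff.mp h4
      exact mul_inv_eq_one.mp h5
    obtain ⟨u, hu⟩ := (Finite.injective_iff_surjective.mp hinj) (Units.mk0 b hb)
    refine ⟨(u : F), u.ne_zero, ?_⟩
    have := congrArg Units.val hu
    rwa [Units.val_pow_eq_pow_val, Units.val_mk0] at this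
  have hNb : ∀ b : F, b ≠ 0 → (univ.filter (fun x : E => x ≠ 0 ∧ f x = b)).card
      = (univ.filter (fun x : E => x ≠ 0 ∧ f x = 1)).card := by
    intro b hb
    obtain ⟨y, hy0, hyd⟩ := hdsurj b hb
    apply Finset.card_bij' (fun x _ => algebraMap F E y⁻¹ * x) (fun x _ => algebraMap F E y * x)
    · intro x hx
      simp only [mem_filter, mem_univ, true_and] at hx ⊢
      refine ⟨mul_ne_zero ((map_ne_zero_iff _ (algebraMap F E).injective).mpr
        (inv_ne_zero hy0)) hx.1, ?_⟩
      rw [hf, hx.2, inv_pow, hyd, inv_mul_cancel₀ hb]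
    · intro x hx
      simp only [mem_filter, mem_univ, true_and] at hx ⊢
      refine ⟨mul_ne_zero ((map_ne_zero_iff _ (algebraMap F E).injective).mpr hy0) hx.1, ?_⟩
      rw [hf, hx.2, mul_one, hyd]
    · intro x _
      rw [← mul_assoc, ← map_mul, mul_inv_cancel₀ hy0, map_one, one_mul]
    · intro x _
      rw [← mul_assoc, ← map_mul, inv_mul_cancel₀ hy0, map_one, one_mul]
  -- partition count gives N₁ = 2^m
  have hsum : ∑ b : F, (univ.filter (fun x : E => x ≠ 0 ∧ f x = b)).card = 2 ^ (2 * m) - 1 := by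
    have h := Finset.card_eq_sum_card_fiberwise
      (s := univ.filter (· ≠ (0:E))) (t := (univ : Finset F)) (f := f)
      (fun x _ => mem_univ _)
    have hL : (univ.filter (· ≠ (0:E))).card = 2 ^ (2 * m) - 1 := by
      rw [Finset.filter_ne', card_erase_of_mem (mem_univ _), card_univ, hcardE]
    rw [hL] at h
    rw [h]
    exact Finset.sum_congr rfl fun b _ => congrArg Finset.card (Finset.filter_filter _ _ _).symm
  have hN1 : (univ.filter (fun x : E => x ≠ 0 ∧ f x = 1)).card = 2 ^ m := by
    have hsplit : ∑ b ∈ (univ : Finset F).erase 0,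
        (univ.filter (fun x : E => x ≠ 0 ∧ f x = b)).card
        + (univ.filter (fun x : E => x ≠ 0 ∧ f x = 0)).card = 2 ^ (2 * m) - 1 := by
      rw [Finset.sum_erase_add _ _ (mem_univ 0)]; exact hsum
    have hconst : ∑ b ∈ (univ : Finset F).erase 0,
        (univ.filter (fun x : E => x ≠ 0 ∧ f x = b)).card
        = (2 ^ m - 1) * (univ.filter (fun x : E => x ≠ 0 ∧ f x = 1)).card := by
      rw [Finset.sum_congr rfl (fun b hb => hNb b (Finset.ne_of_mem_erase hb)),
        Finset.sum_const, card_erase_of_mem (mem_univ _), card_univ, hcardF, smul_eq_mul]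
    rw [hconst, hN0] at hsplit
    -- (2^m-1) * N + (2^m-1) = 2^(2m)-1 = (2^m+1)*(2^m-1)
    have h2 : (2 ^ m - 1) * (univ.filter (fun x : E => x ≠ 0 ∧ f x = 1)).card
        = (2 ^ m) * (2 ^ m - 1) := by
      have h3 : (2 ^ m + 1) * (2 ^ m - 1) = (2 ^ m) * (2 ^ m - 1) + (2 ^ m - 1) := by ring
      omega
    have h4 := h2.trans (mul_comm _ _)
    exact Nat.eq_of_mul_eq_mul_left (by omega) h4
  -- |C₂| = 2^m
  have hC₂card : C₂.card = 2 ^ m := by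
    rw [hC₂, Finset.card_image_of_injOn]
    · rw [← hN1]
      apply Finset.card_bij (fun i _ => α ^ i)
      · intro i hi
        simp only [mem_filter, mem_range] at hi
        simp only [mem_filter, mem_univ, true_and]
        exact ⟨pow_ne_zero _ hα0, hi.2⟩
      · intro i hi j hj hij
        simp only [mem_filter, mem_range] at hi hj
        exact hαinj hi.1 hj.1 hij
      · intro x hx
        simp only [mem_filter, mem_univ, true_and] at hx
        obtain ⟨i, hi, rfl⟩ := hsurj x hx.1
        exact ⟨i, by simp only [mem_filter, mem_range]; exact ⟨hi, hx.2⟩, rfl⟩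
    · intro i hi j hj hij
      simp only [coe_filter, Set.mem_setOf_eq, mem_range] at hi hj
      have := congrArg ZMod.val hij
      rwa [ZMod.val_cast_of_lt hi.1, ZMod.val_cast_of_lt hj.1] at this
  -- the map φ from ZMod (2^m-1) to ZMod (2^(2m)-1)
  set φ : ZMod (2 ^ m - 1) → ZMod (2 ^ (2 * m) - 1) :=
    fun i => (((2 ^ m + 1) * i.val : ℕ) : ZMod (2 ^ (2 * m) - 1)) with hφ
  have hφcast : ∀ x : ℕ, (((2 ^ m + 1) * x : ℕ) : ZMod (2 ^ (2 * m) - 1))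
      = (((2 ^ m + 1) * (x % (2 ^ m - 1)) : ℕ) : ZMod (2 ^ (2 * m) - 1)) := by
    intro x
    have h1 : (2 ^ m + 1) * x
        = (2 ^ m + 1) * (x % (2 ^ m - 1)) + (2 ^ (2 * m) - 1) * (x / (2 ^ m - 1)) := by
      rw [← hvq]
      conv_lhs => rw [← Nat.div_add_mod x (2 ^ m - 1)]
      ring
    rw [h1]
    push_cast
    rw [ZMod.natCast_self]
    ring
  have hφinj : Function.Injective φ := by
    intro i j hij
    simp only [hφ] at hij
    have hlt : ∀ a : ZMod (2 ^ m - 1), (2 ^ m + 1) * a.val < 2 ^ (2 * m) - 1 := by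
      intro a
      calc (2 ^ m + 1) * a.val < (2 ^ m + 1) * (2 ^ m - 1) :=
        mul_lt_mul_of_pos_left (ZMod.val_lt a) (by omega)
      _ = 2 ^ (2 * m) - 1 := hvq
    have := congrArg ZMod.val hij
    rw [ZMod.val_cast_of_lt (hlt i), ZMod.val_cast_of_lt (hlt j)] at this
    have hval : i.val = j.val := by
      have := Nat.eq_of_mul_eq_mul_left (show 0 < 2 ^ m + 1 by omega) this
      exact this
    exact ZMod.val_injective _ hval
  have hφadd : ∀ i j : ZMod (2 ^ m - 1), φ (i + j) = φ i + φ j := by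
    intro i j
    simp only [hφ]
    rw [ZMod.val_add, ← hφcast]
    push_cast
    ring
  have hC₁φ : C₁ = C₁'.image φ := by
    rw [hC₁]
    apply Finset.image_congr
    intro i _
    simp only [hφ]
    push_cast
    ring
  have hτ₁n : τ₁ < 2 ^ m - 1 := by omega
  have hτc0 : (τ₁ : ZMod (2 ^ m - 1)) ≠ 0 := by
    intro h
    rw [ZMod.natCast_eq_zero_iff] at h
    have := Nat.le_of_dvd (by omega) h
    omega
  have hτφ : ((2 ^ m + 1) * (τ₁ : ZMod (2 ^ (2 * m) - 1)) : ZMod (2 ^ (2 * m) - 1))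
      = φ (τ₁ : ZMod (2 ^ m - 1)) := by
    simp only [hφ, ZMod.val_cast_of_lt hτ₁n]
    push_cast
    ring
  -- |C₁ ∩ (C₁ + τ)| = 2^(m-2) - 1
  have hC₁int : (C₁ ∩ C₁.image (fun c => c + ((2 ^ m + 1) * τ₁ :
      ZMod (2 ^ (2 * m) - 1)))).card = 2 ^ (m - 2) - 1 := by
    rw [hC₁φ]
    have himg : (C₁'.image φ).image (fun c => c + ((2 ^ m + 1) * τ₁ : ZMod (2 ^ (2 * m) - 1)))
        = (C₁'.image (fun c => (τ₁ : ZMod (2 ^ m - 1)) + c)).image φ := by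
      rw [Finset.image_image, Finset.image_image]
      apply Finset.image_congr
      intro x _
      simp only [Function.comp_apply]
      rw [hτφ, hφadd, add_comm]
    rw [himg, ← Finset.image_inter _ _ hφinj, Finset.card_image_of_injective _ hφinj,
      hC₁'ds _ hτc0]
  -- projection to ZMod (2^m+1)
  have hdvdproj : (2 ^ m + 1) ∣ (2 ^ (2 * m) - 1) := ⟨2 ^ m - 1, hvq.symm⟩
  set π : ZMod (2 ^ (2 * m) - 1) →+* ZMod (2 ^ m + 1) :=
    ZMod.castHom hdvdproj (ZMod (2 ^ m + 1)) with hπ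
  have hπnat : ∀ x : ℕ, π (((2 ^ m + 1) * x : ℕ) : ZMod (2 ^ (2 * m) - 1)) = 0 := by
    intro x
    rw [map_natCast, ZMod.natCast_eq_zero_iff]
    exact dvd_mul_right _ _
  have hπC₁ : ∀ a ∈ C₁, π a = 0 := by
    intro a ha
    rw [hC₁φ] at ha
    simp only [mem_image] at ha
    obtain ⟨i, _, rfl⟩ := ha
    exact hπnat _
  have hπτ : π ((2 ^ m + 1) * (τ₁ : ZMod (2 ^ (2 * m) - 1))) = 0 := by
    have h1 : ((2 ^ m + 1) * (τ₁ : ZMod (2 ^ (2 * m) - 1)) : ZMod (2 ^ (2 * m) - 1))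
        = (((2 ^ m + 1) * τ₁ : ℕ) : ZMod (2 ^ (2 * m) - 1)) := by push_cast; ring
    rw [h1]
    exact hπnat _
  -- elements of C₂ are determined by their π-image
  have hC₂res : ∀ b ∈ C₂, ∀ b' ∈ C₂, π b = π b' → b = b' := by
    intro b hb b' hb' hπbb
    rw [hC₂] at hb hb'
    simp only [mem_image, mem_filter, mem_range] at hb hb'
    obtain ⟨i, ⟨hi, hfi⟩, rfl⟩ := hb
    obtain ⟨j, ⟨hj, hfj⟩, rfl⟩ := hb'
    rw [map_natCast, map_natCast] at hπbb
    rw [ZMod.natCast_eq_natCast_iff] at hπbb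
    exact congrArg _ (hA i j hi hj hfi hfj hπbb)
  -- main bijection
  have hmain : ((C₁ ∩ C₁.image (fun c => c + ((2 ^ m + 1) * τ₁ : ZMod (2 ^ (2 * m) - 1))))
      ×ˢ C₂).card
      = (C ∩ C.image (fun c => c + ((2 ^ m + 1) * τ₁ : ZMod (2 ^ (2 * m) - 1)))).card := by
    apply Finset.card_bij (fun p _ => p.1 + p.2)
    · intro p hp
      rw [Finset.mem_product, Finset.mem_inter] at hp
      obtain ⟨⟨hp1, hp1'⟩, hp2⟩ := hp
      rw [Finset.mem_image] at hp1'
      obtain ⟨a', ha', ha'e⟩ := hp1'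
      rw [Finset.mem_inter]
      constructor
      · rw [hC]; exact Finset.mem_add.mpr ⟨p.1, hp1, p.2, hp2, rfl⟩
      · rw [Finset.mem_image]
        refine ⟨a' + p.2, by rw [hC]; exact Finset.mem_add.mpr ⟨a', ha', p.2, hp2, rfl⟩, ?_⟩
        rw [← ha'e]; ring
    · intro p hp p' hp' he
      rw [Finset.mem_product, Finset.mem_inter] at hp hp'
      have hb : p.2 = p'.2 := by
        apply hC₂res _ hp.2 _ hp'.2
        have h1 := congrArg π he
        rw [map_add, map_add, hπC₁ _ hp.1.1, hπC₁ _ hp'.1.1, zero_add, zero_add] at h1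
        exact h1
      have ha : p.1 = p'.1 := by
        rw [hb] at he
        exact add_right_cancel he
      exact Prod.ext ha hb
    · intro c hc
      rw [Finset.mem_inter, Finset.mem_image] at hc
      obtain ⟨hcC, c', hc', hc'e⟩ := hc
      rw [hC, Finset.mem_add] at hcC hc'
      obtain ⟨a, ha, b, hb, rfl⟩ := hcC
      obtain ⟨a', ha', b', hb', rfl⟩ := hc'
      -- hc'e : a' + b' + τ = a + b
      have hbb' : b = b' := by
        apply hC₂res _ hb _ hb'
        have h1 := congrArg π hc'e
        rw [map_add, map_add, map_add, hπC₁ _ ha, hπC₁ _ ha', hπτ, zero_add, add_zero,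
          zero_add] at h1
        exact h1.symm
      have haa : a = a' + ((2 ^ m + 1) * τ₁ : ZMod (2 ^ (2 * m) - 1)) := by
        rw [hbb'] at hc'e
        have h2 : a' + ((2 ^ m + 1) * τ₁ : ZMod (2 ^ (2 * m) - 1)) + b' = a + b' := by
          rw [← hc'e]; ring
        exact (add_right_cancel h2).symm
      refine ⟨(a, b), ?_, rfl⟩
      rw [Finset.mem_product, Finset.mem_inter, Finset.mem_image]
      exact ⟨⟨ha, ⟨a', ha', haa.symm⟩⟩, hb⟩
  -- conclude
  rw [← hmain, Finset.card_product, hC₁int, hC₂card]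
  rw [Nat.sub_mul, one_mul, ← pow_add]
  congr 2
  omega
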